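/- arXiv:2508.18604 — 3 statements merged into one kernel-verified Lean document; each statement's English description precedes it below -/
import Mathlib

section
/- For every real λ ≥ 0, the integral ∫_{-λ}^0 (1/(z+λ+1)^4) · e^{2z} dz multiplied by 3(λ+1)^3 is at most 4. -/
open Real intervalIntegral


lemma ehalf : (0.6065:ℝ) ≤ Real.exp (-(1/2)) := by
  have h := Real.exp_one_lt_d9
  have hy : Real.exp (-(1/2)) * Real.exp (-(1/2)) = Real.exp (-1) := by
    rw [← Real.exp_add]; norm_num
  have hinv : Real.exp (-1) * Real.exp 1 = 1 := by
    rw [← Real.exp_add]; norm_num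
  have hsq : Real.exp (-(1/2)) * Real.exp (-(1/2)) * Real.exp 1 = 1 := by
    rw [hy, hinv]
  have hpos : (0:ℝ) < Real.exp (-(1/2)) := Real.exp_pos _
  have he1 : (0:ℝ) < Real.exp 1 := Real.exp_pos _
  nlinarith [hsq, h, hpos, he1]

lemma piece (x a c : ℝ) (ha : a ≤ x) (hxa : x - a ≤ 2) (hc : 0 ≤ c)
    (hce : c ≤ Real.exp (-(2*a))) :
    c * (1 - (x - a)/2)^4 ≤ Real.exp (-(2*x)) := by
  have hsplit : Real.exp (-(2*x)) = Real.exp (-(2*a)) * Real.exp (-(2*(x-a))) := by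
    rw [← Real.exp_add]; ring_nf
  have hbase : (0:ℝ) ≤ 1 - (x - a)/2 := by linarith
  have h1 : 1 - (x-a)/2 ≤ Real.exp (-(2*(x-a))/4) := by
    have := Real.add_one_le_exp (-(2*(x-a))/4)
    linarith
  have h2 : (1 - (x-a)/2)^4 ≤ Real.exp (-(2*(x-a))) := by
    calc (1 - (x-a)/2)^4 ≤ (Real.exp (-(2*(x-a))/4))^4 := by
          exact pow_le_pow_left₀ hbase h1 4
      _ = Real.exp (-(2*(x-a))) := by
          rw [← Real.exp_nat_mul]; push_cast; ring_nf
  calc c * (1 - (x-a)/2)^4 ≤ Real.exp (-(2*a)) * Real.exp (-(2*(x-a))) := by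
        apply mul_le_mul hce h2 (by positivity) (le_of_lt (Real.exp_pos _))
    _ = Real.exp (-(2*x)) := hsplit.symm

lemma equarter (k : ℕ) : (0.6065:ℝ)^k ≤ Real.exp (-(2*((k:ℝ)/4))) := by
  have h : Real.exp (-(2*((k:ℝ)/4))) = Real.exp (-(1/2))^k := by
    rw [← Real.exp_nat_mul]; ring_nf
  rw [h]
  exact pow_le_pow_left₀ (by norm_num) ehalf k

lemma midcase (lam a c qa qb : ℝ) (hs : a ≤ lam) (hs' : lam ≤ a + 1/4)
    (hc : 0 ≤ c) (hqa : 0 ≤ qa) (hqb : 0 ≤ qb)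
    (hce : c ≤ Real.exp (-(2*a)))
    (hconv : qa + qb*(lam - a) ≤ lam^4/2 + 3*lam^3 + 15*lam^2/2 + 19*lam/2 + 21/4)
    (hquad : 47/4 - 4*lam ≤ 3*(c*(1-2*(lam-a))*(qa + qb*(lam-a)))) :
    47/4 - 4*lam ≤ 3 * (Real.exp (-(2*lam)) * (lam^4/2 + 3*lam^3 + 15*lam^2/2 + 19*lam/2 + 21/4)) := by
  have hlin_nn : 0 ≤ qa + qb*(lam-a) :=
    add_nonneg hqa (mul_nonneg hqb (by linarith))
  have hQnn : (0:ℝ) ≤ lam^4/2 + 3*lam^3 + 15*lam^2/2 + 19*lam/2 + 21/4 := le_trans hlin_nn hconv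
  have hE : c * (1 - (lam - a)/2)^4 ≤ Real.exp (-(2*lam)) :=
    piece lam a c hs (by linarith) hc hce
  have step := mul_le_mul_of_nonneg_right hE hQnn
  have hq4 : 1 - 2*(lam-a) ≤ (1 - (lam-a)/2)^4 := by
    nlinarith [mul_nonneg (sq_nonneg (lam-a)) (sq_nonneg (lam-a-4))]
  have hcc := mul_le_mul_of_nonneg_left hq4 hc
  have h2 := mul_le_mul_of_nonneg_right hcc hlin_nn
  have h3 : c*(1-(lam-a)/2)^4*(qa + qb*(lam-a)) ≤ c*(1-(lam-a)/2)^4*(lam^4/2 + 3*lam^3 + 15*lam^2/2 + 19*lam/2 + 21/4) := by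
    have hcc2 : (0:ℝ) ≤ c*(1-(lam-a)/2)^4 := by positivity
    exact mul_le_mul_of_nonneg_left hconv hcc2
  calc 47/4 - 4*lam ≤ 3*(c*(1-2*(lam-a))*(qa + qb*(lam-a))) := hquad
    _ ≤ 3*(c*(1-(lam-a)/2)^4*(qa + qb*(lam-a))) := by linarith [h2]
    _ ≤ 3*(c*(1-(lam-a)/2)^4*(lam^4/2 + 3*lam^3 + 15*lam^2/2 + 19*lam/2 + 21/4)) := by linarith [h3]
    _ ≤ 3 * (Real.exp (-(2*lam)) * (lam^4/2 + 3*lam^3 + 15*lam^2/2 + 19*lam/2 + 21/4)) := by linarith [step]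

set_option maxHeartbeats 3000000 in
lemma key (lam : ℝ) (hlam : 0 ≤ lam) :
    47/4 - 4*lam ≤ 3 * (Real.exp (-(2*lam)) * (lam^4/2 + 3*lam^3 + 15*lam^2/2 + 19*lam/2 + 21/4)) := by
  rcases le_or_gt (47/16 : ℝ) lam with hbig | hsm
  · have hQ : (0:ℝ) ≤ lam^4/2 + 3*lam^3 + 15*lam^2/2 + 19*lam/2 + 21/4 := by
      nlinarith [mul_nonneg (mul_nonneg (mul_nonneg hlam hlam) hlam) hlam, mul_nonneg (mul_nonneg hlam hlam) hlam, mul_nonneg hlam hlam]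
    nlinarith [mul_nonneg (le_of_lt (Real.exp_pos (-(2*lam)))) hQ]
  · rcases le_or_gt lam ((1/4) : ℝ) with h1 | h1
    · refine midcase lam (0) ((0.6065:ℝ)^0) (21/4) (19/2) hlam (by linarith : lam ≤ (0) + 1/4) (by norm_num) (by norm_num) (by norm_num) ?_ ?_ ?_
      · have h0 := equarter 0
        have e1 : Real.exp (-(2*(((0:ℕ):ℝ)/4))) = Real.exp (-(2*(0))) := by
          congr 1 <;> push_cast <;> norm_num
        rw [e1] at h0; exact h0
      · nlinarith [sq_nonneg (lam - (0)), mul_nonneg (sq_nonneg (lam - (0))) hlam, mul_nonneg (sq_nonneg (lam - (0))) (mul_nonneg hlam hlam)]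
      · nlinarith [mul_nonneg (by linarith : (0:ℝ) ≤ lam - (0)) (by linarith : (0:ℝ) ≤ (0) + 1/4 - lam)]
    rcases le_or_gt lam ((1/2) : ℝ) with h2 | h2
    · refine midcase lam (1/4) ((0.6065:ℝ)^1) (4169/512) (443/32) (le_of_lt h1) (by linarith : lam ≤ (1/4) + 1/4) (by norm_num) (by norm_num) (by norm_num) ?_ ?_ ?_
      · have h0 := equarter 1
        have e1 : Real.exp (-(2*(((1:ℕ):ℝ)/4))) = Real.exp (-(2*(1/4))) := by
          congr 1 <;> push_cast <;> norm_num
        rw [e1] at h0; exact h0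
      · nlinarith [sq_nonneg (lam - (1/4)), mul_nonneg (sq_nonneg (lam - (1/4))) hlam, mul_nonneg (sq_nonneg (lam - (1/4))) (mul_nonneg hlam hlam)]
      · nlinarith [mul_nonneg (by linarith : (0:ℝ) ≤ lam - (1/4)) (by linarith : (0:ℝ) ≤ (1/4) + 1/4 - lam)]
    rcases le_or_gt lam ((3/4) : ℝ) with h3 | h3
    · refine midcase lam (1/2) ((0.6065:ℝ)^2) (393/32) (39/2) (le_of_lt h2) (by linarith : lam ≤ (1/2) + 1/4) (by norm_num) (by norm_num) (by norm_num) ?_ ?_ ?_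
      · have h0 := equarter 2
        have e1 : Real.exp (-(2*(((2:ℕ):ℝ)/4))) = Real.exp (-(2*(1/2))) := by
          congr 1 <;> push_cast <;> norm_num
        rw [e1] at h0; exact h0
      · nlinarith [sq_nonneg (lam - (1/2)), mul_nonneg (sq_nonneg (lam - (1/2))) hlam, mul_nonneg (sq_nonneg (lam - (1/2))) (mul_nonneg hlam hlam)]
      · nlinarith [mul_nonneg (by linarith : (0:ℝ) ≤ lam - (1/2)) (by linarith : (0:ℝ) ≤ (1/2) + 1/4 - lam)]
    rcases le_or_gt lam ((1) : ℝ) with h4 | h4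
    · refine midcase lam (3/4) ((0.6065:ℝ)^3) (9225/512) (853/32) (le_of_lt h3) (by linarith : lam ≤ (3/4) + 1/4) (by norm_num) (by norm_num) (by norm_num) ?_ ?_ ?_
      · have h0 := equarter 3
        have e1 : Real.exp (-(2*(((3:ℕ):ℝ)/4))) = Real.exp (-(2*(3/4))) := by
          congr 1 <;> push_cast <;> norm_num
        rw [e1] at h0; exact h0
      · nlinarith [sq_nonneg (lam - (3/4)), mul_nonneg (sq_nonneg (lam - (3/4))) hlam, mul_nonneg (sq_nonneg (lam - (3/4))) (mul_nonneg hlam hlam)]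
      · nlinarith [mul_nonneg (by linarith : (0:ℝ) ≤ lam - (3/4)) (by linarith : (0:ℝ) ≤ (3/4) + 1/4 - lam)]
    rcases le_or_gt lam ((5/4) : ℝ) with h5 | h5
    · refine midcase lam (1) ((0.6065:ℝ)^4) (103/4) (71/2) (le_of_lt h4) (by linarith : lam ≤ (1) + 1/4) (by norm_num) (by norm_num) (by norm_num) ?_ ?_ ?_
      · have h0 := equarter 4
        have e1 : Real.exp (-(2*(((4:ℕ):ℝ)/4))) = Real.exp (-(2*(1))) := by
          congr 1 <;> push_cast <;> norm_num
        rw [e1] at h0; exact h0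
      · nlinarith [sq_nonneg (lam - (1)), mul_nonneg (sq_nonneg (lam - (1))) hlam, mul_nonneg (sq_nonneg (lam - (1))) (mul_nonneg hlam hlam)]
      · nlinarith [mul_nonneg (by linarith : (0:ℝ) ≤ lam - (1)) (by linarith : (0:ℝ) ≤ (1) + 1/4 - lam)]
    rcases le_or_gt lam ((3/2) : ℝ) with h6 | h6
    · refine midcase lam (5/4) ((0.6065:ℝ)^5) (18393/512) (1479/32) (le_of_lt h5) (by linarith : lam ≤ (5/4) + 1/4) (by norm_num) (by norm_num) (by norm_num) ?_ ?_ ?_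
      · have h0 := equarter 5
        have e1 : Real.exp (-(2*(((5:ℕ):ℝ)/4))) = Real.exp (-(2*(5/4))) := by
          congr 1 <;> push_cast <;> norm_num
        rw [e1] at h0; exact h0
      · nlinarith [sq_nonneg (lam - (5/4)), mul_nonneg (sq_nonneg (lam - (5/4))) hlam, mul_nonneg (sq_nonneg (lam - (5/4))) (mul_nonneg hlam hlam)]
      · nlinarith [mul_nonneg (by linarith : (0:ℝ) ≤ lam - (5/4)) (by linarith : (0:ℝ) ≤ (5/4) + 1/4 - lam)]
    rcases le_or_gt lam ((7/4) : ℝ) with h7 | h7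
    · refine midcase lam (3/2) ((0.6065:ℝ)^6) (1569/32) (59) (le_of_lt h6) (by linarith : lam ≤ (3/2) + 1/4) (by norm_num) (by norm_num) (by norm_num) ?_ ?_ ?_
      · have h0 := equarter 6
        have e1 : Real.exp (-(2*(((6:ℕ):ℝ)/4))) = Real.exp (-(2*(3/2))) := by
          congr 1 <;> push_cast <;> norm_num
        rw [e1] at h0; exact h0
      · nlinarith [sq_nonneg (lam - (3/2)), mul_nonneg (sq_nonneg (lam - (3/2))) hlam, mul_nonneg (sq_nonneg (lam - (3/2))) (mul_nonneg hlam hlam)]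
      · nlinarith [mul_nonneg (by linarith : (0:ℝ) ≤ lam - (3/2)) (by linarith : (0:ℝ) ≤ (3/2) + 1/4 - lam)]
    rcases le_or_gt lam ((2) : ℝ) with h8 | h8
    · refine midcase lam (7/4) ((0.6065:ℝ)^7) (33593/512) (2369/32) (le_of_lt h7) (by linarith : lam ≤ (7/4) + 1/4) (by norm_num) (by norm_num) (by norm_num) ?_ ?_ ?_
      · have h0 := equarter 7
        have e1 : Real.exp (-(2*(((7:ℕ):ℝ)/4))) = Real.exp (-(2*(7/4))) := by
          congr 1 <;> push_cast <;> norm_num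
        rw [e1] at h0; exact h0
      · nlinarith [sq_nonneg (lam - (7/4)), mul_nonneg (sq_nonneg (lam - (7/4))) hlam, mul_nonneg (sq_nonneg (lam - (7/4))) (mul_nonneg hlam hlam)]
      · nlinarith [mul_nonneg (by linarith : (0:ℝ) ≤ lam - (7/4)) (by linarith : (0:ℝ) ≤ (7/4) + 1/4 - lam)]
    rcases le_or_gt lam ((9/4) : ℝ) with h9 | h9
    · refine midcase lam (2) ((0.6065:ℝ)^8) (345/4) (183/2) (le_of_lt h8) (by linarith : lam ≤ (2) + 1/4) (by norm_num) (by norm_num) (by norm_num) ?_ ?_ ?_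
      · have h0 := equarter 8
        have e1 : Real.exp (-(2*(((8:ℕ):ℝ)/4))) = Real.exp (-(2*(2))) := by
          congr 1 <;> push_cast <;> norm_num
        rw [e1] at h0; exact h0
      · nlinarith [sq_nonneg (lam - (2)), mul_nonneg (sq_nonneg (lam - (2))) hlam, mul_nonneg (sq_nonneg (lam - (2))) (mul_nonneg hlam hlam)]
      · nlinarith [mul_nonneg (by linarith : (0:ℝ) ≤ lam - (2)) (by linarith : (0:ℝ) ≤ (2) + 1/4 - lam)]
    rcases le_or_gt lam ((5/2) : ℝ) with h10 | h10
    · refine midcase lam (9/4) ((0.6065:ℝ)^9) (57129/512) (3571/32) (le_of_lt h9) (by linarith : lam ≤ (9/4) + 1/4) (by norm_num) (by norm_num) (by norm_num) ?_ ?_ ?_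
      · have h0 := equarter 9
        have e1 : Real.exp (-(2*(((9:ℕ):ℝ)/4))) = Real.exp (-(2*(9/4))) := by
          congr 1 <;> push_cast <;> norm_num
        rw [e1] at h0; exact h0
      · nlinarith [sq_nonneg (lam - (9/4)), mul_nonneg (sq_nonneg (lam - (9/4))) hlam, mul_nonneg (sq_nonneg (lam - (9/4))) (mul_nonneg hlam hlam)]
      · nlinarith [mul_nonneg (by linarith : (0:ℝ) ≤ lam - (9/4)) (by linarith : (0:ℝ) ≤ (9/4) + 1/4 - lam)]
    rcases le_or_gt lam ((11/4) : ℝ) with h11 | h11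
    · refine midcase lam (5/2) ((0.6065:ℝ)^10) (4553/32) (269/2) (le_of_lt h10) (by linarith : lam ≤ (5/2) + 1/4) (by norm_num) (by norm_num) (by norm_num) ?_ ?_ ?_
      · have h0 := equarter 10
        have e1 : Real.exp (-(2*(((10:ℕ):ℝ)/4))) = Real.exp (-(2*(5/2))) := by
          congr 1 <;> push_cast <;> norm_num
        rw [e1] at h0; exact h0
      · nlinarith [sq_nonneg (lam - (5/2)), mul_nonneg (sq_nonneg (lam - (5/2))) hlam, mul_nonneg (sq_nonneg (lam - (5/2))) (mul_nonneg hlam hlam)]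
      · nlinarith [mul_nonneg (by linarith : (0:ℝ) ≤ lam - (5/2)) (by linarith : (0:ℝ) ≤ (5/2) + 1/4 - lam)]
    refine midcase lam (11/4) ((0.6065:ℝ)^11) (91689/512) (5133/32) (le_of_lt h11) (by linarith : lam ≤ (11/4) + 1/4) (by norm_num) (by norm_num) (by norm_num) ?_ ?_ ?_
    · have h0 := equarter 11
      have e1 : Real.exp (-(2*(((11:ℕ):ℝ)/4))) = Real.exp (-(2*(11/4))) := by
        congr 1 <;> push_cast <;> norm_num
      rw [e1] at h0; exact h0
    · nlinarith [sq_nonneg (lam - (11/4)), mul_nonneg (sq_nonneg (lam - (11/4))) hlam, mul_nonneg (sq_nonneg (lam - (11/4))) (mul_nonneg hlam hlam)]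
    · nlinarith [mul_nonneg (by linarith : (0:ℝ) ≤ lam - (11/4)) (by linarith : (0:ℝ) ≤ (11/4) + 1/4 - lam)]

theorem stmt1 (lam : ℝ) (hlam : 0 ≤ lam) :
    3 * (lam + 1) ^ 3 * ∫ z in (-lam)..0, Real.exp (2 * z) / (z + lam + 1) ^ 4 ≤ 4 := by
  have hL : (0:ℝ) < lam + 1 := by linarith
  have hab : -lam ≤ (0:ℝ) := by linarith
  -- derivative of the antiderivative
  have hF : ∀ z : ℝ, HasDerivAt
      (fun z => Real.exp (2*z) * (z^4/2 - 3*z^3 + 15*z^2/2 - 19*z/2 + 21/4))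
      ((1-z)^4 * Real.exp (2*z)) z := by
    intro z
    have h1 : HasDerivAt (fun z:ℝ => Real.exp (2*z)) (Real.exp (2*z) * 2) z := by
      simpa using (HasDerivAt.exp ((hasDerivAt_id' (𝕜 := ℝ) z).const_mul (2:ℝ)))
    have h2 : HasDerivAt (fun z:ℝ => z^4/2 - 3*z^3 + 15*z^2/2 - 19*z/2 + 21/4)
        (2*z^3 - 9*z^2 + 15*z - 19/2) z := by
      have h := (((((hasDerivAt_pow 4 z).div_const 2).sub
        ((hasDerivAt_pow 3 z).const_mul (3:ℝ))).add
        (((hasDerivAt_pow 2 z).const_mul (15:ℝ)).div_const 2)).sub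
        (((hasDerivAt_id' (𝕜 := ℝ) z).const_mul (19:ℝ)).div_const 2)).add_const (21/4 : ℝ)
      exact h.congr_deriv (by push_cast; ring)
    have h3 := h1.mul h2
    exact h3.congr_deriv (by ring)
  -- continuity of the majorant
  have hgc : Continuous (fun z:ℝ => (1-z)^4 * Real.exp (2*z) / (lam+1)^4) :=
    (((continuous_const.sub continuous_id).pow 4).mul
      (Real.continuous_exp.comp (continuous_const.mul continuous_id))).div_const _
  have hgc2 : Continuous (fun z:ℝ => (1-z)^4 * Real.exp (2*z)) :=
    ((continuous_const.sub continuous_id).pow 4).mul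
      (Real.continuous_exp.comp (continuous_const.mul continuous_id))
  -- integrability of the integrand
  have hf_int : IntervalIntegrable (fun z => Real.exp (2*z) / (z+lam+1)^4) MeasureTheory.volume (-lam) 0 := by
    apply ContinuousOn.intervalIntegrable
    apply ContinuousOn.div
    · exact (Real.continuous_exp.comp (continuous_const.mul continuous_id)).continuousOn
    · exact ((continuous_id.add continuous_const).add continuous_const).pow 4 |>.continuousOn
    · intro z hz
      rw [Set.uIcc_of_le hab] at hz
      have : (0:ℝ) < z + lam + 1 := by have := hz.1; linarith
      positivity
  -- pointwise comparison
  have hmono : (∫ z in (-lam)..0, Real.exp (2*z) / (z+lam+1)^4)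
      ≤ ∫ z in (-lam)..0, (1-z)^4 * Real.exp (2*z) / (lam+1)^4 := by
    apply intervalIntegral.integral_mono_on hab hf_int (hgc.intervalIntegrable _ _)
    intro z hz
    have hz1 : (0:ℝ) < z + lam + 1 := by have := hz.1; linarith
    have key2 : lam + 1 ≤ (z+lam+1)*(1-z) := by
      nlinarith [mul_nonneg (neg_nonneg.mpr hz.2) (by linarith [hz.1] : (0:ℝ) ≤ z + lam)]
    have h4 : (lam+1)^4 ≤ ((z+lam+1)*(1-z))^4 := pow_le_pow_left₀ (le_of_lt hL) key2 4
    rw [div_le_div_iff₀ (by positivity) (by positivity)]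
    calc Real.exp (2*z) * (lam+1)^4
        ≤ Real.exp (2*z) * ((z+lam+1)*(1-z))^4 :=
          mul_le_mul_of_nonneg_left h4 (le_of_lt (Real.exp_pos (2*z)))
      _ = (1-z)^4 * Real.exp (2*z) * (z+lam+1)^4 := by ring
  -- evaluate the majorant integral
  have hgval : (∫ z in (-lam)..0, (1-z)^4 * Real.exp (2*z))
      = 21/4 - Real.exp (-(2*lam)) * (lam^4/2 + 3*lam^3 + 15*lam^2/2 + 19*lam/2 + 21/4) := by
    rw [intervalIntegral.integral_eq_sub_of_hasDerivAt (fun z _ => hF z)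
      (hgc2.intervalIntegrable _ _)]
    rw [show (2:ℝ)*(-lam) = -(2*lam) by ring]
    norm_num [Real.exp_zero]
    ring
  have hgval2 : (∫ z in (-lam)..0, (1-z)^4 * Real.exp (2*z) / (lam+1)^4)
      = (21/4 - Real.exp (-(2*lam)) * (lam^4/2 + 3*lam^3 + 15*lam^2/2 + 19*lam/2 + 21/4)) / (lam+1)^4 := by
    rw [intervalIntegral.integral_div, hgval]
  have hkey := key lam hlam
  have hQnn : (0:ℝ) ≤ lam^4/2 + 3*lam^3 + 15*lam^2/2 + 19*lam/2 + 21/4 := by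
    nlinarith [pow_nonneg hlam 4, pow_nonneg hlam 3, pow_nonneg hlam 2]
  have htnn : 0 ≤ Real.exp (-(2*lam)) * (lam^4/2 + 3*lam^3 + 15*lam^2/2 + 19*lam/2 + 21/4) :=
    mul_nonneg (Real.exp_pos _).le hQnn
  have hchain : 3 * (lam + 1) ^ 3 * ∫ z in (-lam)..0, Real.exp (2 * z) / (z + lam + 1) ^ 4
      ≤ 3 * (lam + 1) ^ 3 * ((21/4 - Real.exp (-(2*lam)) * (lam^4/2 + 3*lam^3 + 15*lam^2/2 + 19*lam/2 + 21/4)) / (lam+1)^4) := by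
    rw [← hgval2]
    exact mul_le_mul_of_nonneg_left hmono (by positivity)
  refine le_trans hchain ?_
  set t := Real.exp (-(2*lam)) * (lam^4/2 + 3*lam^3 + 15*lam^2/2 + 19*lam/2 + 21/4) with ht
  have heq : 3 * (lam + 1) ^ 3 * ((21/4 - t) / (lam+1)^4) = (3*(21/4 - t))/(lam+1) := by
    field_simp
  rw [heq, div_le_iff₀ hL]
  linarith [hkey]
end

section
/- Let F_β : ℝ → [0,1] be a cumulative distribution function satisfying F_β(-(β/(1-β))(x^{β-1} - (1-x)^{β-1})) = x for all x ∈ (0,1), where β ∈ (0,1). Then the limit as z → ∞ of z·f(z)/(1-F_β(z)) equals 1/(1-β), where f is the density (derivative of F_β). -/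
open Real Filter

noncomputable def cfun (β : ℝ) (x : ℝ) : ℝ :=
  -(β / (1 - β)) * (x ^ (β - 1) - (1 - x) ^ (β - 1))

noncomputable def dfun (β : ℝ) (x : ℝ) : ℝ :=
  β * (x ^ (β - 2) + (1 - x) ^ (β - 2))

lemma cfun_hasDerivAt {β : ℝ} (hβ : β ∈ Set.Ioo (0 : ℝ) 1) {x : ℝ}
    (hx : x ∈ Set.Ioo (0 : ℝ) 1) : HasDerivAt (cfun β) (dfun β x) x := by
  obtain ⟨hx0, hx1⟩ := hx
  have h1x : (0:ℝ) < 1 - x := by linarith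
  have h1 : HasDerivAt (fun y : ℝ => y ^ (β - 1)) ((β - 1) * x ^ (β - 1 - 1)) x :=
    Real.hasDerivAt_rpow_const (Or.inl hx0.ne')
  have h2 : HasDerivAt (fun y : ℝ => (1 - y) ^ (β - 1))
      ((β - 1) * (1 - x) ^ (β - 1 - 1) * (-1)) x := by
    have hsub : HasDerivAt (fun y : ℝ => 1 - y) (-1) x := by
      simpa using (hasDerivAt_id x).const_sub 1
    exact (Real.hasDerivAt_rpow_const (p := β - 1) (Or.inl h1x.ne')).comp x hsub
  have h3 := ((h1.sub h2).const_mul (-(β / (1 - β))))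
  have hb1 : (1:ℝ) - β ≠ 0 := by linarith [hβ.2]
  have : β - 1 - 1 = β - 2 := by ring
  rw [this] at h3
  refine h3.congr_deriv ?_
  unfold dfun
  field_simp
  ring

lemma dfun_pos {β : ℝ} (hβ : β ∈ Set.Ioo (0 : ℝ) 1) {x : ℝ}
    (hx : x ∈ Set.Ioo (0 : ℝ) 1) : 0 < dfun β x := by
  have h1x : (0:ℝ) < 1 - x := by linarith [hx.2]
  have h1 := Real.rpow_pos_of_pos hx.1 (β - 2)
  have h2 := Real.rpow_pos_of_pos h1x (β - 2)
  exact mul_pos hβ.1 (add_pos h1 h2)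

lemma cfun_strictMono {β : ℝ} (hβ : β ∈ Set.Ioo (0 : ℝ) 1) :
    StrictMonoOn (cfun β) (Set.Ioo (0 : ℝ) 1) := by
  apply StrictMonoOn.mono (s := Set.Ioo (0:ℝ) 1) ?_ le_rfl
  apply strictMonoOn_of_deriv_pos (convex_Ioo 0 1)
  · exact fun x hx => ((cfun_hasDerivAt hβ hx).differentiableAt).continuousAt.continuousWithinAt
  · intro x hx
    rw [interior_Ioo] at hx
    rw [(cfun_hasDerivAt hβ hx).deriv]
    exact dfun_pos hβ hx

lemma cfun_tendsto_top {β : ℝ} (hβ : β ∈ Set.Ioo (0 : ℝ) 1) :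
    Tendsto (cfun β) (nhdsWithin 1 (Set.Iio 1)) atTop := by
  have hb1 : (0:ℝ) < 1 - β := by linarith [hβ.2]
  -- (1-x)^(β-1) → atTop
  have hsub : Tendsto (fun x : ℝ => 1 - x) (nhdsWithin 1 (Set.Iio 1))
      (nhdsWithin 0 (Set.Ioi 0)) := by
    apply tendsto_nhdsWithin_of_tendsto_nhds_of_eventually_within
    · have : Tendsto (fun x : ℝ => 1 - x) (nhds 1) (nhds 0) := by
        simpa using (continuous_sub_left (1:ℝ)).tendsto 1
      exact this.mono_left nhdsWithin_le_nhds
    · filter_upwards [self_mem_nhdsWithin] with x hx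
      simpa using hx
  have hinv : Tendsto (fun t : ℝ => t⁻¹ ^ (1 - β)) (nhdsWithin 0 (Set.Ioi 0)) atTop :=
    (tendsto_rpow_atTop hb1).comp tendsto_inv_nhdsGT_zero
  have hpow : Tendsto (fun t : ℝ => t ^ (β - 1)) (nhdsWithin 0 (Set.Ioi 0)) atTop := by
    apply hinv.congr'
    filter_upwards [self_mem_nhdsWithin] with t ht
    have ht0 : (0:ℝ) < t := ht
    rw [show t⁻¹ = t ^ (-1:ℝ) by rw [Real.rpow_neg ht0.le, Real.rpow_one],
      ← Real.rpow_mul ht0.le]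
    congr 1
    ring
  have h1 : Tendsto (fun x : ℝ => (1 - x) ^ (β - 1)) (nhdsWithin 1 (Set.Iio 1)) atTop :=
    hpow.comp hsub
  have h2 : Tendsto (fun x : ℝ => -(x ^ (β - 1))) (nhdsWithin 1 (Set.Iio 1))
      (nhds (-(1 : ℝ))) := by
    have : Tendsto (fun x : ℝ => x ^ (β - 1)) (nhds 1) (nhds 1) := by
      have := (Real.continuousAt_rpow_const 1 (β - 1) (Or.inl one_ne_zero)).tendsto
      simpa [Real.one_rpow] using this
    exact (this.mono_left nhdsWithin_le_nhds).neg
  have h3 : Tendsto (fun x : ℝ => (1 - x) ^ (β - 1) + -(x ^ (β - 1)))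
      (nhdsWithin 1 (Set.Iio 1)) atTop := h1.atTop_add h2
  have hc : Tendsto (fun x : ℝ => (β / (1 - β)) * ((1 - x) ^ (β - 1) + -(x ^ (β - 1))))
      (nhdsWithin 1 (Set.Iio 1)) atTop := by
    exact Tendsto.const_mul_atTop (div_pos hβ.1 hb1) h3
  apply hc.congr
  intro x
  unfold cfun
  ring

lemma cfun_tendsto_bot {β : ℝ} (hβ : β ∈ Set.Ioo (0 : ℝ) 1) :
    Tendsto (cfun β) (nhdsWithin 0 (Set.Ioi 0)) atBot := by
  have hsub : Tendsto (fun x : ℝ => 1 - x) (nhdsWithin 0 (Set.Ioi 0))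
      (nhdsWithin 1 (Set.Iio 1)) := by
    apply tendsto_nhdsWithin_of_tendsto_nhds_of_eventually_within
    · have : Tendsto (fun x : ℝ => 1 - x) (nhds 0) (nhds 1) := by
        simpa using (continuous_sub_left (1:ℝ)).tendsto 0
      exact this.mono_left nhdsWithin_le_nhds
    · filter_upwards [self_mem_nhdsWithin] with x hx
      simp only [Set.mem_Iio]
      have : (0:ℝ) < x := hx
      linarith
  have h := tendsto_neg_atTop_atBot.comp ((cfun_tendsto_top hβ).comp hsub)
  apply h.congr
  intro x
  show -(cfun β (1 - x)) = cfun β x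
  unfold cfun
  have hxx : (1:ℝ) - (1 - x) = x := by ring
  rw [hxx]
  ring

lemma cfun_surj {β : ℝ} (hβ : β ∈ Set.Ioo (0 : ℝ) 1) (z : ℝ) :
    ∃ x ∈ Set.Ioo (0 : ℝ) 1, cfun β x = z := by
  obtain ⟨b, hb, hbz⟩ : ∃ b ∈ Set.Ioo (0:ℝ) 1, z < cfun β b := by
    have := (cfun_tendsto_top hβ).eventually_gt_atTop z
    have hne : (nhdsWithin (1:ℝ) (Set.Iio 1)).NeBot := nhdsLT_neBot 1
    obtain ⟨b, hb1, hb2⟩ := (this.and (Ioo_mem_nhdsLT_of_mem (Set.mem_Ioc.2 ⟨zero_lt_one, le_refl (1:ℝ)⟩))).exists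
    exact ⟨b, hb2, hb1⟩
  obtain ⟨a, ha, haz⟩ : ∃ a ∈ Set.Ioo (0:ℝ) 1, cfun β a < z ∧ a < b := by
    have h1 := (cfun_tendsto_bot hβ).eventually_lt_atBot z
    have h2 : ∀ᶠ x in nhdsWithin (0:ℝ) (Set.Ioi 0), x ∈ Set.Ioo 0 b :=
      Ioo_mem_nhdsGT_of_mem (Set.mem_Ico.2 ⟨le_refl (0:ℝ), hb.1⟩)
    have hne : (nhdsWithin (0:ℝ) (Set.Ioi 0)).NeBot := nhdsGT_neBot 0
    obtain ⟨a, ha1, ha2⟩ := (h1.and h2).exists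
    exact ⟨a, ⟨ha2.1, ha2.2.trans hb.2⟩, ha1, ha2.2⟩
  obtain ⟨haz, hab⟩ := haz
  have hcont : ContinuousOn (cfun β) (Set.Icc a b) := by
    intro x hx
    have hx' : x ∈ Set.Ioo (0:ℝ) 1 :=
      ⟨lt_of_lt_of_le ha.1 hx.1, lt_of_le_of_lt hx.2 hb.2⟩
    exact ((cfun_hasDerivAt hβ hx').differentiableAt).continuousAt.continuousWithinAt
  have := intermediate_value_Ioo hab.le hcont
  have hz : z ∈ Set.Ioo (cfun β a) (cfun β b) := ⟨haz, hbz⟩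
  obtain ⟨x, hx, hxz⟩ := this hz
  exact ⟨x, ⟨lt_trans ha.1 hx.1, lt_trans hx.2 hb.2⟩, hxz⟩

theorem stmt2 (β : ℝ) (hβ : β ∈ Set.Ioo (0 : ℝ) 1) (F : ℝ → ℝ)
    (hF01 : ∀ z : ℝ, F z ∈ Set.Icc (0 : ℝ) 1)
    (hquant : ∀ x ∈ Set.Ioo (0 : ℝ) 1,
      F (-(β / (1 - β)) * (x ^ (β - 1) - (1 - x) ^ (β - 1))) = x)
    (hdiff : Differentiable ℝ F) :
    Tendsto (fun z : ℝ => z * deriv F z / (1 - F z)) atTop (nhds (1 / (1 - β))) := by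
  have hβ0 := hβ.1
  have hβ1 := hβ.2
  have hb1 : (0:ℝ) < 1 - β := by linarith
  have hquant' : ∀ x ∈ Set.Ioo (0:ℝ) 1, F (cfun β x) = x := by
    intro x hx; exact hquant x hx
  -- key: F is the inverse of cfun
  have hkey : ∀ z : ℝ, F z ∈ Set.Ioo (0:ℝ) 1 ∧ cfun β (F z) = z := by
    intro z
    obtain ⟨x, hx, hxz⟩ := cfun_surj hβ z
    have : F z = x := by rw [← hxz]; exact hquant' x hx
    rw [this, hxz]
    exact ⟨hx, rfl⟩
  -- derivative of F
  have hderiv : ∀ z : ℝ, deriv F z = (dfun β (F z))⁻¹ := by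
    intro z
    have hc : HasDerivAt (cfun β) (dfun β (F z)) (F z) := cfun_hasDerivAt hβ (hkey z).1
    have hF : HasDerivAt F (deriv F z) z := (hdiff z).hasDerivAt
    have hcomp : HasDerivAt (fun w => cfun β (F w)) (dfun β (F z) * deriv F z) z :=
      hc.comp z hF
    have hid : (fun w => cfun β (F w)) = id := funext fun w => (hkey w).2
    rw [hid] at hcomp
    have h1 : dfun β (F z) * deriv F z = 1 := hcomp.unique (hasDerivAt_id z)
    have hd := dfun_pos hβ (hkey z).1
    field_simp [hd.ne']
    linear_combination h1
  -- F z → 1 within Iio 1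
  have hFtop : Tendsto F atTop (nhdsWithin 1 (Set.Iio 1)) := by
    apply tendsto_nhdsWithin_of_tendsto_nhds_of_eventually_within
    · rw [tendsto_order]
      constructor
      · intro a ha
        set x0 : ℝ := max a (1/2) with hx0def
        have hx0 : x0 ∈ Set.Ioo (0:ℝ) 1 := by
          constructor
          · have : (1:ℝ)/2 ≤ x0 := le_max_right _ _
            linarith
          · exact max_lt ha (by norm_num)
        filter_upwards [eventually_gt_atTop (cfun β x0)] with z hz
        have hFz := (hkey z).1
        by_contra hcon
        push_neg at hcon
        have hle : F z ≤ x0 := le_trans hcon (le_max_left _ _)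
        have : cfun β (F z) ≤ cfun β x0 := by
          rcases eq_or_lt_of_le hle with h | h
          · rw [h]
          · exact le_of_lt ((cfun_strictMono hβ) hFz hx0 h)
        rw [(hkey z).2] at this
        linarith
      · intro a ha
        filter_upwards with z
        exact lt_of_lt_of_le ((hkey z).1).2 (le_of_lt ha) |>.trans_le le_rfl
    · filter_upwards with z
      exact ((hkey z)).1.2
  -- limit of h x = cfun x / (dfun x * (1-x)) as x → 1⁻
  have hh : Tendsto (fun x : ℝ => cfun β x / (dfun β x * (1 - x)))
      (nhdsWithin 1 (Set.Iio 1)) (nhds (1 / (1 - β))) := by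
    have hIoo : ∀ᶠ x in nhdsWithin (1:ℝ) (Set.Iio 1), x ∈ Set.Ioo (0:ℝ) 1 :=
      Ioo_mem_nhdsLT_of_mem (Set.mem_Ioc.2 ⟨zero_lt_one, le_refl (1:ℝ)⟩)
    -- numerator and denominator after multiplying by (1-x)^(1-β)
    have hN : Tendsto (fun x : ℝ => (β / (1 - β)) * (1 - x ^ (β - 1) * (1 - x) ^ (1 - β)))
        (nhdsWithin 1 (Set.Iio 1)) (nhds (β / (1 - β))) := by
      have t1 : Tendsto (fun x : ℝ => x ^ (β - 1)) (nhdsWithin 1 (Set.Iio 1)) (nhds 1) := by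
        have := (Real.continuousAt_rpow_const 1 (β - 1) (Or.inl one_ne_zero)).tendsto
        simpa [Real.one_rpow] using this.mono_left nhdsWithin_le_nhds
      have t2 : Tendsto (fun x : ℝ => (1 - x) ^ (1 - β)) (nhdsWithin 1 (Set.Iio 1))
          (nhds 0) := by
        have hc0 : ContinuousAt (fun t : ℝ => t ^ (1 - β)) 0 :=
          Real.continuousAt_rpow_const 0 (1 - β) (Or.inr hb1.le)
        have hsub : Tendsto (fun x : ℝ => 1 - x) (nhdsWithin 1 (Set.Iio 1)) (nhds 0) := by
          have : Tendsto (fun x : ℝ => 1 - x) (nhds 1) (nhds 0) := by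
            simpa using (continuous_sub_left (1:ℝ)).tendsto 1
          exact this.mono_left nhdsWithin_le_nhds
        have := hc0.tendsto.comp hsub
        simpa [Real.zero_rpow (ne_of_gt hb1), Function.comp_def] using this
      have := (tendsto_const_nhds (x := (β / (1 - β)))).mul
        ((tendsto_const_nhds (x := (1:ℝ))).sub (t1.mul t2))
      simpa using this
    have hD : Tendsto (fun x : ℝ => β * (x ^ (β - 2) * (1 - x) ^ (2 - β) + 1))
        (nhdsWithin 1 (Set.Iio 1)) (nhds β) := by
      have t1 : Tendsto (fun x : ℝ => x ^ (β - 2)) (nhdsWithin 1 (Set.Iio 1)) (nhds 1) := by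
        have := (Real.continuousAt_rpow_const 1 (β - 2) (Or.inl one_ne_zero)).tendsto
        simpa [Real.one_rpow] using this.mono_left nhdsWithin_le_nhds
      have t2 : Tendsto (fun x : ℝ => (1 - x) ^ (2 - β)) (nhdsWithin 1 (Set.Iio 1))
          (nhds 0) := by
        have h2b : (0:ℝ) < 2 - β := by linarith
        have hc0 : ContinuousAt (fun t : ℝ => t ^ (2 - β)) 0 :=
          Real.continuousAt_rpow_const 0 (2 - β) (Or.inr h2b.le)
        have hsub : Tendsto (fun x : ℝ => 1 - x) (nhdsWithin 1 (Set.Iio 1)) (nhds 0) := by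
          have : Tendsto (fun x : ℝ => 1 - x) (nhds 1) (nhds 0) := by
            simpa using (continuous_sub_left (1:ℝ)).tendsto 1
          exact this.mono_left nhdsWithin_le_nhds
        have := hc0.tendsto.comp hsub
        simpa [Real.zero_rpow (ne_of_gt h2b), Function.comp_def] using this
      have := (tendsto_const_nhds (x := β)).mul
        (((t1.mul t2)).add (tendsto_const_nhds (x := (1:ℝ))))
      simpa using this
    have hdiv := hN.div hD (ne_of_gt hβ.1)
    have hval : (β / (1 - β)) / β = 1 / (1 - β) := by
      rw [div_div, mul_comm, ← div_div, div_self hβ.1.ne']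
    rw [hval] at hdiv
    apply hdiv.congr'
    filter_upwards [hIoo] with x hx
    obtain ⟨hx0, hx1⟩ := hx
    have h1x : (0:ℝ) < 1 - x := by linarith
    have ht : (0:ℝ) < (1 - x) ^ (1 - β) := Real.rpow_pos_of_pos h1x _
    -- show N/D = cfun/(dfun*(1-x))
    have hNum : (β / (1 - β)) * (1 - x ^ (β - 1) * (1 - x) ^ (1 - β)) =
        cfun β x * (1 - x) ^ (1 - β) := by
      unfold cfun
      have hbt : (1 - x) ^ (β - 1) * (1 - x) ^ (1 - β) = 1 := by
        rw [← Real.rpow_add h1x]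
        norm_num
      linear_combination (-(β / (1 - β))) * hbt
    have hDen : β * (x ^ (β - 2) * (1 - x) ^ (2 - β) + 1) =
        (dfun β x * (1 - x)) * (1 - x) ^ (1 - β) := by
      unfold dfun
      have e1 : (1 - x) * (1 - x) ^ (1 - β) = (1 - x) ^ (2 - β) := by
        nth_rewrite 1 [← Real.rpow_one (1 - x)]
        rw [← Real.rpow_add h1x]
        congr 1
        ring
      have e2 : (1 - x) ^ (β - 2) * (1 - x) ^ (2 - β) = 1 := by
        rw [← Real.rpow_add h1x]
        norm_num
      calc β * (x ^ (β - 2) * (1 - x) ^ (2 - β) + 1)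
          = β * (x ^ (β - 2) * (1 - x) ^ (2 - β) + (1 - x) ^ (β - 2) * (1 - x) ^ (2 - β)) := by
            rw [e2]
        _ = β * (x ^ (β - 2) + (1 - x) ^ (β - 2)) * (1 - x) ^ (2 - β) := by ring
        _ = β * (x ^ (β - 2) + (1 - x) ^ (β - 2)) * ((1 - x) * (1 - x) ^ (1 - β)) := by
            rw [e1]
        _ = _ := by ring
    simp only [Pi.div_apply]
    rw [hNum, hDen, mul_div_mul_right _ _ (ne_of_gt ht)]
  -- conclude
  have hcomp := hh.comp hFtop
  apply hcomp.congr
  intro z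
  obtain ⟨hFz, hz2⟩ := hkey z
  have h1F : (0:ℝ) < 1 - F z := by linarith [hFz.2]
  have hd := dfun_pos hβ hFz
  have hz' : z = cfun β (F z) := hz2.symm
  simp only [Function.comp_apply]
  conv_rhs => rw [hderiv z]
  nth_rewrite 4 [hz']
  field_simp
end

section
/- For any integer K ≥ 2 and reals a_1, ..., a_K with a_j ≥ 0, define h(z) = Σ_{j=1}^K 1/(2(z + a_j + 1)^2) for z ≥ 0. Then ∫_0^∞ h(z) e^{-h(z)} dz ≤ 2√2 √(K-1) + (e/√2)·√K · ∫_0^1 w^{-1/2} e^{-w} dw ≤ 5.7√K · (e/2), and in particular 2e·∫_0^∞ h(z)e^{-h(z)} dz ≤ 5.7√K. -/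
open Real MeasureTheory intervalIntegral

set_option maxHeartbeats 2000000 in
theorem stmt13 (K : ℕ) (hK : 2 ≤ K) (a : Fin K → ℝ) (ha : ∀ j, 0 ≤ a j) :
    ((∫ z in Set.Ioi (0 : ℝ),
        (∑ j, 1 / (2 * (z + a j + 1) ^ 2)) *
          Real.exp (-(∑ j, 1 / (2 * (z + a j + 1) ^ 2)))) ≤
      2 * Real.sqrt 2 * Real.sqrt ((K : ℝ) - 1) +
        (Real.exp 1 / Real.sqrt 2) * Real.sqrt (K : ℝ) *
          ∫ w in (0 : ℝ)..1, w ^ (-(1 : ℝ) / 2) * Real.exp (-w)) ∧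
    (2 * Real.sqrt 2 * Real.sqrt ((K : ℝ) - 1) +
        (Real.exp 1 / Real.sqrt 2) * Real.sqrt (K : ℝ) *
          ∫ w in (0 : ℝ)..1, w ^ (-(1 : ℝ) / 2) * Real.exp (-w)) ≤
      5.7 * Real.sqrt (K : ℝ) * (Real.exp 1 / 2) ∧
    2 * Real.exp 1 *
        (∫ z in Set.Ioi (0 : ℝ),
          (∑ j, 1 / (2 * (z + a j + 1) ^ 2)) *
            Real.exp (-(∑ j, 1 / (2 * (z + a j + 1) ^ 2)))) ≤
      5.7 * Real.sqrt (K : ℝ) := by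
  have hK2 : (2:ℝ) ≤ (K:ℝ) := by exact_mod_cast hK
  set f : ℝ → ℝ := fun z =>
    (∑ j, 1 / (2 * (z + a j + 1) ^ 2)) * Real.exp (-(∑ j, 1 / (2 * (z + a j + 1) ^ 2)))
    with hf_def
  set g : ℝ → ℝ := fun z => (K:ℝ) / (2 * (z + 1) ^ 2) with hg_def
  -- t e^{-t} ≤ e^{-1}
  have Ltxe : ∀ t : ℝ, t * Real.exp (-t) ≤ Real.exp (-1) := by
    intro t
    have h := Real.add_one_le_exp (t - 1)
    have h2 : Real.exp (t - 1) * Real.exp (-t) = Real.exp (-1) := by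
      rw [← Real.exp_add]; ring_nf
    nlinarith [Real.exp_pos (-t), Real.exp_pos (t - 1)]
  -- pointwise facts on Ici 0
  have hsum_nonneg : ∀ z : ℝ, 0 ≤ ∑ j, 1 / (2 * (z + a j + 1) ^ 2) := by
    intro z; exact Finset.sum_nonneg fun j _ => by positivity
  have hsum_le : ∀ z : ℝ, 0 ≤ z → (∑ j, 1 / (2 * (z + a j + 1) ^ 2)) ≤ g z := by
    intro z hz
    have : (∑ j, 1 / (2 * (z + a j + 1) ^ 2)) ≤ ∑ _j : Fin K, 1 / (2 * (z + 1) ^ 2) := by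
      refine Finset.sum_le_sum fun j _ => ?_
      have haj := ha j
      have h1 : (0:ℝ) < 2 * (z + 1) ^ 2 := by positivity
      have h2 : 2 * (z + 1) ^ 2 ≤ 2 * (z + a j + 1) ^ 2 := by nlinarith
      exact one_div_le_one_div_of_le h1 h2
    calc (∑ j, 1 / (2 * (z + a j + 1) ^ 2)) ≤ ∑ _j : Fin K, 1 / (2 * (z + 1) ^ 2) := this
      _ = g z := by
        rw [Finset.sum_const, Finset.card_univ, Fintype.card_fin, nsmul_eq_mul, mul_one_div]
  have hf_nonneg : ∀ z : ℝ, 0 ≤ f z := fun z =>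
    mul_nonneg (hsum_nonneg z) (Real.exp_pos _).le
  have hf_le_g : ∀ z : ℝ, 0 ≤ z → f z ≤ g z := by
    intro z hz
    calc f z ≤ (∑ j, 1 / (2 * (z + a j + 1) ^ 2)) * 1 :=
          mul_le_mul_of_nonneg_left
            (Real.exp_le_one_iff.mpr (neg_nonpos.mpr (hsum_nonneg z))) (hsum_nonneg z)
      _ = ∑ j, 1 / (2 * (z + a j + 1) ^ 2) := mul_one _
      _ ≤ g z := hsum_le z hz
  have hf_le_e : ∀ z : ℝ, f z ≤ Real.exp (-1) := fun z => Ltxe _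
  -- integrability and value of g on Ioi c
  have hgfact : ∀ c : ℝ, 0 ≤ c → IntegrableOn g (Set.Ioi c) ∧
      ∫ z in Set.Ioi c, g z = (K:ℝ) / (2 * (c + 1)) := by
    intro c hc
    have hderiv : ∀ x ∈ Set.Ici c, HasDerivAt (fun z : ℝ => -((K:ℝ) / 2) * (z + 1)⁻¹) (g x) x := by
      intro x hx
      have hx0 : (0:ℝ) < x + 1 := by
        have : c ≤ x := hx; linarith
      have h1 : HasDerivAt (fun z : ℝ => z + 1) 1 x := (hasDerivAt_id x).add_const 1
      have h3 := (h1.inv hx0.ne').const_mul (-((K:ℝ) / 2))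
      refine h3.congr_deriv ?_
      rw [hg_def]
      field_simp
    have htend : Filter.Tendsto (fun z : ℝ => -((K:ℝ) / 2) * (z + 1)⁻¹) Filter.atTop (nhds 0) := by
      have : Filter.Tendsto (fun z : ℝ => (z + 1)⁻¹) Filter.atTop (nhds 0) :=
        (Filter.tendsto_atTop_add_const_right _ 1 Filter.tendsto_id).inv_tendsto_atTop
      simpa using this.const_mul (-((K:ℝ) / 2))
    have hpos : ∀ x ∈ Set.Ioi c, 0 ≤ g x := fun x _ => by positivity
    refine ⟨integrableOn_Ioi_deriv_of_nonneg' hderiv hpos htend, ?_⟩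
    rw [integral_Ioi_of_hasDerivAt_of_nonneg' hderiv hpos htend]
    have : (0:ℝ) < c + 1 := by linarith
    field_simp
    ring
  -- continuity of f on Ici 0
  have hfc : ContinuousOn f (Set.Ici 0) := by
    have hhc : ContinuousOn (fun z : ℝ => ∑ j, 1 / (2 * (z + a j + 1) ^ 2)) (Set.Ici 0) := by
      refine continuousOn_finset_sum _ fun j _ => ?_
      refine ContinuousOn.div continuousOn_const (by fun_prop) ?_
      intro z hz
      have hz0 : (0:ℝ) ≤ z := hz
      have := ha j
      positivity
    exact hhc.mul ((Real.continuous_exp.comp_continuousOn hhc.neg))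
  -- integrability of f on Ioi c for 0 ≤ c
  have hfint : ∀ c : ℝ, 0 ≤ c → IntegrableOn f (Set.Ioi c) := by
    intro c hc
    refine ((hgfact c hc).1).mono' ?_ ?_
    · exact (hfc.mono fun z hz => le_of_lt (lt_of_le_of_lt hc hz)).aestronglyMeasurable
        measurableSet_Ioi
    · filter_upwards [ae_restrict_mem measurableSet_Ioi] with z hz
      rw [Real.norm_eq_abs, abs_of_nonneg (hf_nonneg z)]
      exact hf_le_g z (le_of_lt (lt_of_le_of_lt hc hz))
  -- the split point
  set z0 : ℝ := Real.sqrt (2 * ((K:ℝ) - 1)) with hz0_def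
  have hz0 : 0 ≤ z0 := Real.sqrt_nonneg _
  have hz0eq : z0 = Real.sqrt 2 * Real.sqrt ((K:ℝ) - 1) := Real.sqrt_mul (by norm_num) _
  have hsKz0 : Real.sqrt (K:ℝ) ≤ z0 + 1 := by
    have h1 : Real.sqrt (K:ℝ) ≤ z0 := Real.sqrt_le_sqrt (by linarith)
    linarith
  -- main estimate
  have hsplit : (∫ z in Set.Ioi (0:ℝ), f z) =
      (∫ z in Set.Ioc (0:ℝ) z0, f z) + ∫ z in Set.Ioi z0, f z := by
    have hU : Set.Ioc (0:ℝ) z0 ∪ Set.Ioi z0 = Set.Ioi 0 := Set.Ioc_union_Ioi_eq_Ioi hz0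
    rw [← hU, setIntegral_union (Set.Ioc_disjoint_Ioi le_rfl) measurableSet_Ioi
      ((hfint 0 le_rfl).mono_set Set.Ioc_subset_Ioi_self) (hfint z0 hz0)]
  have hp1 : (∫ z in Set.Ioc (0:ℝ) z0, f z) ≤ z0 * Real.exp (-1) := by
    have h1 : (∫ z in Set.Ioc (0:ℝ) z0, f z) ≤ ∫ _z in Set.Ioc (0:ℝ) z0, Real.exp (-1) := by
      refine setIntegral_mono_on ((hfint 0 le_rfl).mono_set Set.Ioc_subset_Ioi_self)
        (integrableOn_const measure_Ioc_lt_top.ne) measurableSet_Ioc ?_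
      intro z _; exact hf_le_e z
    have h2 : (∫ _z in Set.Ioc (0:ℝ) z0, Real.exp (-1)) = z0 * Real.exp (-1) := by
      rw [setIntegral_const, Real.volume_real_Ioc_of_le hz0, smul_eq_mul]
      ring_nf
    linarith
  have hp2 : (∫ z in Set.Ioi z0, f z) ≤ Real.sqrt (K:ℝ) / 2 := by
    have h1 : (∫ z in Set.Ioi z0, f z) ≤ ∫ z in Set.Ioi z0, g z := by
      refine setIntegral_mono_on (hfint z0 hz0) (hgfact z0 hz0).1 measurableSet_Ioi ?_
      intro z hz; exact hf_le_g z (le_of_lt (lt_of_le_of_lt hz0 hz))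
    rw [(hgfact z0 hz0).2] at h1
    have hsK : Real.sqrt (K:ℝ) * Real.sqrt (K:ℝ) = (K:ℝ) :=
      Real.mul_self_sqrt (by linarith)
    have hsKpos : (0:ℝ) < Real.sqrt (K:ℝ) := Real.sqrt_pos.mpr (by linarith)
    have h2 : (K:ℝ) / (2 * (z0 + 1)) ≤ (K:ℝ) / (2 * Real.sqrt (K:ℝ)) :=
      div_le_div_of_nonneg_left (by linarith) (by linarith) (by linarith)
    have h3 : (K:ℝ) / (2 * Real.sqrt (K:ℝ)) = Real.sqrt (K:ℝ) / 2 := by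
      rw [div_eq_div_iff (by positivity) (by norm_num)]; nlinarith [hsK]
    linarith
  have hmain : (∫ z in Set.Ioi (0:ℝ), f z) ≤ z0 * Real.exp (-1) + Real.sqrt (K:ℝ) / 2 := by
    rw [hsplit]; linarith
  -- the w-integral facts
  have hcI : ContinuousOn (fun w : ℝ => w ^ (-(1:ℝ)/2) * Real.exp (-w)) (Set.Ioc 0 1) := by
    intro w hw
    exact (((Real.continuousAt_rpow_const w _ (Or.inl hw.1.ne')).mul
      ((Real.continuous_exp.comp continuous_neg).continuousAt))).continuousWithinAt
  have hr : IntervalIntegrable (fun w : ℝ => w ^ (-(1:ℝ)/2)) volume 0 1 :=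
    intervalIntegral.intervalIntegrable_rpow' (by norm_num)
  have hIint : IntervalIntegrable (fun w : ℝ => w ^ (-(1:ℝ)/2) * Real.exp (-w)) volume 0 1 := by
    rw [intervalIntegrable_iff, Set.uIoc_of_le (by norm_num : (0:ℝ) ≤ 1)] at hr ⊢
    refine hr.mono' (hcI.aestronglyMeasurable measurableSet_Ioc) ?_
    filter_upwards [ae_restrict_mem measurableSet_Ioc] with w hw
    have h1 : (0:ℝ) ≤ w ^ (-(1:ℝ)/2) := Real.rpow_nonneg hw.1.le _
    rw [Real.norm_eq_abs, abs_mul, abs_of_nonneg h1, abs_of_nonneg (Real.exp_pos _).le]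
    calc w ^ (-(1:ℝ)/2) * Real.exp (-w) ≤ w ^ (-(1:ℝ)/2) * 1 :=
          mul_le_mul_of_nonneg_left (Real.exp_le_one_iff.mpr (by linarith [hw.1.le])) h1
      _ = w ^ (-(1:ℝ)/2) := mul_one _
  have hval : (∫ w in (0:ℝ)..1, w ^ (-(1:ℝ)/2)) = 2 := by
    rw [integral_rpow (Or.inl (by norm_num))]
    norm_num
  have hupper : (∫ w in (0:ℝ)..1, w ^ (-(1:ℝ)/2) * Real.exp (-w)) ≤ 2 := by
    have hmono : (∫ w in (0:ℝ)..1, w ^ (-(1:ℝ)/2) * Real.exp (-w)) ≤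
        ∫ w in (0:ℝ)..1, w ^ (-(1:ℝ)/2) := by
      refine intervalIntegral.integral_mono_on (by norm_num) hIint hr ?_
      intro w hw
      have h1 : (0:ℝ) ≤ w ^ (-(1:ℝ)/2) := Real.rpow_nonneg hw.1 _
      calc w ^ (-(1:ℝ)/2) * Real.exp (-w) ≤ w ^ (-(1:ℝ)/2) * 1 :=
            mul_le_mul_of_nonneg_left (Real.exp_le_one_iff.mpr (by linarith [hw.1])) h1
        _ = w ^ (-(1:ℝ)/2) := mul_one _
    linarith
  have hlower : Real.exp (-1) * 2 ≤ ∫ w in (0:ℝ)..1, w ^ (-(1:ℝ)/2) * Real.exp (-w) := by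
    have hval2 : (∫ w in (0:ℝ)..1, Real.exp (-1) * w ^ (-(1:ℝ)/2)) = Real.exp (-1) * 2 := by
      rw [intervalIntegral.integral_const_mul, hval]
    have hmono : (∫ w in (0:ℝ)..1, Real.exp (-1) * w ^ (-(1:ℝ)/2)) ≤
        ∫ w in (0:ℝ)..1, w ^ (-(1:ℝ)/2) * Real.exp (-w) := by
      refine intervalIntegral.integral_mono_on (by norm_num) (hr.const_mul _) hIint ?_
      intro w hw
      have h1 : (0:ℝ) ≤ w ^ (-(1:ℝ)/2) := Real.rpow_nonneg hw.1 _
      have h2 : Real.exp (-1) ≤ Real.exp (-w) := Real.exp_le_exp.mpr (by linarith [hw.2])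
      calc Real.exp (-1) * w ^ (-(1:ℝ)/2) ≤ Real.exp (-w) * w ^ (-(1:ℝ)/2) :=
            mul_le_mul_of_nonneg_right h2 h1
        _ = w ^ (-(1:ℝ)/2) * Real.exp (-w) := mul_comm _ _
    linarith
  -- numeric facts
  set s2 : ℝ := Real.sqrt 2 with hs2_def
  set sK : ℝ := Real.sqrt (K:ℝ) with hsK_def
  set sK1 : ℝ := Real.sqrt ((K:ℝ) - 1) with hsK1_def
  set I : ℝ := ∫ w in (0:ℝ)..1, w ^ (-(1:ℝ)/2) * Real.exp (-w) with hI_def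
  set E : ℝ := Real.exp 1 with hE_def
  have hs2sq : s2 * s2 = 2 := Real.mul_self_sqrt (by norm_num)
  have hs2nn : 0 ≤ s2 := Real.sqrt_nonneg _
  have hs2lb : 1.414 ≤ s2 := by nlinarith
  have hs2ub : s2 ≤ 1.415 := by nlinarith
  have hsKnn : 0 ≤ sK := Real.sqrt_nonneg _
  have hsK1nn : 0 ≤ sK1 := Real.sqrt_nonneg _
  have hsK1K : sK1 ≤ sK := Real.sqrt_le_sqrt (by linarith)
  have hElb : 2.718 ≤ E := by
    have := Real.exp_one_gt_d9; rw [hE_def]; linarith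
  have hEub : E ≤ 2.719 := by
    have := Real.exp_one_lt_d9; rw [hE_def]; linarith
  have hEinv : E * Real.exp (-1) = 1 := by
    rw [hE_def, ← Real.exp_add]; norm_num
  have hexpneg_pos : (0:ℝ) < Real.exp (-1) := Real.exp_pos _
  have hexpneg_le : Real.exp (-1) ≤ 1 := Real.exp_le_one_iff.mpr (by norm_num)
  have hmain' : (∫ z in Set.Ioi (0:ℝ), f z) ≤ s2 * sK1 * Real.exp (-1) + sK / 2 := by
    rw [← hz0eq]; exact hmain
  refine ⟨?_, ?_, ?_⟩
  · -- Goal 1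
    have hBI : s2 * sK ≤ E / s2 * sK * I := by
      have h1 : E / s2 * sK * (Real.exp (-1) * 2) ≤ E / s2 * sK * I :=
        mul_le_mul_of_nonneg_left hlower (by positivity)
      have h2 : E / s2 * sK * (Real.exp (-1) * 2) = s2 * sK := by
        field_simp
        linear_combination 2 * sK * hEinv - sK * hs2sq
      linarith
    nlinarith
  · -- Goal 2
    have hBI : E / s2 * sK * I ≤ E * s2 * sK := by
      have h1 : E / s2 * sK * I ≤ E / s2 * sK * 2 :=
        mul_le_mul_of_nonneg_left hupper (by positivity)
      have h2 : E / s2 * sK * 2 = E * s2 * sK := by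
        field_simp
        linear_combination (-sK) * hs2sq
      linarith
    have t1 : 2 * s2 * sK1 ≤ 2.83 * sK := by
      nlinarith [mul_le_mul hs2ub hsK1K hsK1nn (by norm_num : (0:ℝ) ≤ 1.415)]
    have t2 : E * s2 * sK ≤ 2.719 * 1.415 * sK :=
      mul_le_mul_of_nonneg_right
        (mul_le_mul hEub hs2ub hs2nn (by norm_num)) hsKnn
    have t3 : 7.74 * sK ≤ 5.7 * sK * (E / 2) := by nlinarith
    linarith
  · -- Goal 3
    have h1 : 2 * E * (∫ z in Set.Ioi (0:ℝ), f z) ≤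
        2 * E * (s2 * sK1 * Real.exp (-1) + sK / 2) :=
      mul_le_mul_of_nonneg_left hmain' (by positivity)
    have h2 : 2 * E * (s2 * sK1 * Real.exp (-1) + sK / 2) =
        2 * s2 * sK1 * (E * Real.exp (-1)) + E * sK := by ring
    rw [hEinv] at h2
    nlinarith
end
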